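/- The linear span of the family of vector fields {∇E_{kl} : k, l ≥ 1} ∪ {curl_Γ H_{kl} : k, l ∈ ℕ, (k,l) ≠ (0,0)} is dense in the Hilbert space L²((0,1)²; ℝ²), where E_{kl}(x,y) = sin(kπx) sin(lπy) and H_{kl}(x,y) = cos(kπx) cos(lπy). -/

import Mathlib

open Real MeasureTheory

/-- A pair of reals as a vector in `EuclideanSpace ℝ (Fin 2)`. -/
noncomputable def vec2 (a b : ℝ) : EuclideanSpace ℝ (Fin 2) :=
  (WithLp.equiv 2 (Fin 2 → ℝ)).symm ![a, b]

namespace SSCproof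

/-! ### Generic helper lemmas -/

lemma deriv_sin_mul (a c x : ℝ) :
    deriv (fun t : ℝ => sin (a * t) * c) x = a * cos (a * x) * c := by
  have h : HasDerivAt (fun t : ℝ => sin (a * t) * c) (cos (a * x) * (a * 1) * c) x :=
    ((Real.hasDerivAt_sin (a * x)).comp x ((hasDerivAt_id x).const_mul a)).mul_const c
  rw [h.deriv]; ring

lemma deriv_mul_sin (a c x : ℝ) :
    deriv (fun t : ℝ => c * sin (a * t)) x = a * c * cos (a * x) := by
  have h : HasDerivAt (fun t : ℝ => c * sin (a * t)) (c * (cos (a * x) * (a * 1))) x :=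
    ((Real.hasDerivAt_sin (a * x)).comp x ((hasDerivAt_id x).const_mul a)).const_mul c
  rw [h.deriv]; ring

lemma deriv_cos_mul (a c x : ℝ) :
    deriv (fun t : ℝ => cos (a * t) * c) x = -(a * sin (a * x)) * c := by
  have h : HasDerivAt (fun t : ℝ => cos (a * t) * c) (-sin (a * x) * (a * 1) * c) x :=
    ((Real.hasDerivAt_cos (a * x)).comp x ((hasDerivAt_id x).const_mul a)).mul_const c
  rw [h.deriv]; ring

lemma deriv_mul_cos (a c x : ℝ) :
    deriv (fun t : ℝ => c * cos (a * t)) x = -(a * c * sin (a * x)) := by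
  have h : HasDerivAt (fun t : ℝ => c * cos (a * t)) (c * (-sin (a * x) * (a * 1))) x :=
    ((Real.hasDerivAt_cos (a * x)).comp x ((hasDerivAt_id x).const_mul a)).const_mul c
  rw [h.deriv]; ring

lemma vec2_apply_zero (a b : ℝ) : vec2 a b 0 = a := rfl
lemma vec2_apply_one (a b : ℝ) : vec2 a b 1 = b := rfl

lemma vec2_norm_le (a b : ℝ) : ‖vec2 a b‖ ≤ |a| + |b| := by
  rw [EuclideanSpace.norm_eq]
  have h1 : ∑ i : Fin 2, ‖vec2 a b i‖ ^ 2 = |a| ^ 2 + |b| ^ 2 := by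
    rw [Fin.sum_univ_two, vec2_apply_zero, vec2_apply_one, Real.norm_eq_abs, Real.norm_eq_abs]
  rw [h1]
  have h2 : |a| ^ 2 + |b| ^ 2 ≤ (|a| + |b|) ^ 2 := by nlinarith [abs_nonneg a, abs_nonneg b]
  calc Real.sqrt (|a| ^ 2 + |b| ^ 2) ≤ Real.sqrt ((|a| + |b|) ^ 2) := Real.sqrt_le_sqrt h2
    _ = |a| + |b| := Real.sqrt_sq (by positivity)

lemma continuous_vec2 {f g : ℝ × ℝ → ℝ} (hf : Continuous f) (hg : Continuous g) :
    Continuous fun p => vec2 (f p) (g p) := by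
  apply Continuous.comp (PiLp.continuous_toLp 2 (fun _ : Fin 2 => ℝ))
  apply continuous_pi
  intro i
  fin_cases i <;> simpa

lemma inner_vec2 (a b : ℝ) (x : EuclideanSpace ℝ (Fin 2)) :
    (inner ℝ (vec2 a b) x : ℝ) = a * x 0 + b * x 1 := by
  rw [PiLp.inner_apply, Fin.sum_univ_two, vec2_apply_zero, vec2_apply_one]
  simp [RCLike.inner_apply]
  ring

lemma euclid_apply_le_norm (x : EuclideanSpace ℝ (Fin 2)) (i : Fin 2) : |x i| ≤ ‖x‖ := by
  rw [EuclideanSpace.norm_eq]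
  have h : |x i| = Real.sqrt (‖x i‖ ^ 2) := by
    rw [Real.sqrt_sq_eq_abs, Real.norm_eq_abs, abs_abs]
  rw [h]
  apply Real.sqrt_le_sqrt
  exact Finset.single_le_sum (f := fun j => ‖x j‖ ^ 2) (fun j _ => by positivity)
    (Finset.mem_univ i)

/-! ### The unit square and its measure -/

/-- Lebesgue measure restricted to the open unit square. -/
noncomputable abbrev sqMeas : Measure (ℝ × ℝ) := volume.restrict (Set.Ioo (0 : ℝ) 1 ×ˢ Set.Ioo (0 : ℝ) 1)

noncomputable instance : IsFiniteMeasure sqMeas := by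
  constructor
  rw [Measure.restrict_apply_univ]
  rw [show (volume : Measure (ℝ × ℝ)) = (volume : Measure ℝ).prod volume from rfl]
  rw [Measure.prod_prod, Real.volume_Ioo]
  simp

lemma sq_ae_mem : ∀ᵐ p ∂sqMeas, p ∈ Set.Ioo (0 : ℝ) 1 ×ˢ Set.Ioo (0 : ℝ) 1 :=
  ae_restrict_mem (measurableSet_Ioo.prod measurableSet_Ioo)

/-- The closed unit square. -/
abbrev sqK : Set (ℝ × ℝ) := Set.Icc (0, 0) (1, 1)

lemma sq_mem_K {p : ℝ × ℝ} (hp : p ∈ Set.Ioo (0 : ℝ) 1 ×ˢ Set.Ioo (0 : ℝ) 1) : p ∈ sqK := by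
  obtain ⟨⟨h1, h2⟩, h3, h4⟩ := hp
  exact ⟨⟨h1.le, h3.le⟩, ⟨h2.le, h4.le⟩⟩

/-! ### Stone–Weierstrass for the product-cosine system -/

/-- The product-cosine continuous map on the closed square, integer frequencies. -/
noncomputable def ccK (k l : ℤ) : C(sqK, ℝ) :=
  ⟨fun q => cos (k * π * q.1.1) * cos (l * π * q.1.2), by fun_prop⟩

lemma ccK_apply (k l : ℤ) (q : sqK) :
    ccK k l q = cos (k * π * q.1.1) * cos (l * π * q.1.2) := rfl

/-- The span of the product cosines. -/
noncomputable def ccSpan : Submodule ℝ C(sqK, ℝ) :=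
  Submodule.span ℝ (Set.range fun kl : ℤ × ℤ => ccK kl.1 kl.2)

lemma ccK_mem (k l : ℤ) : ccK k l ∈ ccSpan :=
  Submodule.subset_span ⟨(k, l), rfl⟩

lemma ccK_mul (k l k' l' : ℤ) : ccK k l * ccK k' l' =
    (1/4 : ℝ) • (ccK (k+k') (l+l') + ccK (k+k') (l-l') + ccK (k-k') (l+l')
      + ccK (k-k') (l-l')) := by
  ext q
  simp only [ContinuousMap.mul_apply, ContinuousMap.smul_apply, ContinuousMap.add_apply,
    ccK_apply, smul_eq_mul]
  push_cast
  rw [show ((k:ℝ)+k') * π * q.1.1 = k*π*q.1.1 + k'*π*q.1.1 by ring,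
    show ((k:ℝ)-k') * π * q.1.1 = k*π*q.1.1 - k'*π*q.1.1 by ring,
    show ((l:ℝ)+l') * π * q.1.2 = l*π*q.1.2 + l'*π*q.1.2 by ring,
    show ((l:ℝ)-l') * π * q.1.2 = l*π*q.1.2 - l'*π*q.1.2 by ring,
    cos_add, cos_sub, cos_add, cos_sub]
  ring

lemma ccSpan_mul_mem : ∀ a ∈ ccSpan, ∀ b ∈ ccSpan, a * b ∈ ccSpan := by
  intro a ha b hb
  induction ha using Submodule.span_induction with
  | mem x hx =>
    obtain ⟨⟨k, l⟩, rfl⟩ := hx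
    induction hb using Submodule.span_induction with
    | mem y hy =>
      obtain ⟨⟨k', l'⟩, rfl⟩ := hy
      rw [ccK_mul]
      exact Submodule.smul_mem _ _ (Submodule.add_mem _ (Submodule.add_mem _
        (Submodule.add_mem _ (ccK_mem _ _) (ccK_mem _ _)) (ccK_mem _ _)) (ccK_mem _ _))
    | zero => simp only [mul_zero]; exact Submodule.zero_mem ccSpan
    | add y z _ _ h1 h2 => rw [mul_add]; exact Submodule.add_mem _ h1 h2
    | smul c y _ h1 => rw [mul_smul_comm]; exact Submodule.smul_mem _ _ h1
  | zero => simp only [zero_mul]; exact Submodule.zero_mem ccSpan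
  | add y z _ _ h1 h2 => rw [add_mul]; exact Submodule.add_mem _ h1 h2
  | smul c y _ h1 => rw [smul_mul_assoc]; exact Submodule.smul_mem _ _ h1

lemma ccK_one : (1 : C(sqK, ℝ)) = ccK 0 0 := by
  ext q; simp [ccK_apply]

/-- The cc span as a subalgebra. -/
noncomputable def ccAlg : Subalgebra ℝ C(sqK, ℝ) :=
  ccSpan.toSubalgebra (ccK_one ▸ ccK_mem 0 0) (fun x y hx hy => ccSpan_mul_mem x hx y hy)

lemma mem_ccAlg_iff {x : C(sqK, ℝ)} : x ∈ ccAlg ↔ x ∈ ccSpan := Iff.rfl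

lemma ccAlg_separates : (ccAlg : Subalgebra ℝ C(sqK, ℝ)).SeparatesPoints := by
  intro p q hpq
  have h1 : p.1.1 ∈ Set.Icc (0:ℝ) 1 ∧ p.1.2 ∈ Set.Icc (0:ℝ) 1 := by
    have := p.2; rw [Set.mem_Icc] at this
    exact ⟨⟨this.1.1, this.2.1⟩, ⟨this.1.2, this.2.2⟩⟩
  have h2 : q.1.1 ∈ Set.Icc (0:ℝ) 1 ∧ q.1.2 ∈ Set.Icc (0:ℝ) 1 := by
    have := q.2; rw [Set.mem_Icc] at this
    exact ⟨⟨this.1.1, this.2.1⟩, ⟨this.1.2, this.2.2⟩⟩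
  have hmem : ∀ x : ℝ, x ∈ Set.Icc (0:ℝ) 1 → π * x ∈ Set.Icc 0 π := by
    intro x hx
    exact ⟨mul_nonneg pi_pos.le hx.1, by nlinarith [hx.2, pi_pos]⟩
  have hd : p.1.1 ≠ q.1.1 ∨ p.1.2 ≠ q.1.2 := by
    by_contra h
    push_neg at h
    exact hpq (Subtype.ext (Prod.ext h.1 h.2))
  rcases hd with hd | hd
  · refine ⟨_, ⟨ccK 1 0, ccK_mem 1 0, rfl⟩, ?_⟩
    simp only [ccK_apply]
    push_cast
    simp only [one_mul, zero_mul, cos_zero, mul_one]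
    intro h
    exact hd (mul_left_cancel₀ pi_ne_zero (Real.injOn_cos (hmem _ h1.1) (hmem _ h2.1) h))
  · refine ⟨_, ⟨ccK 0 1, ccK_mem 0 1, rfl⟩, ?_⟩
    simp only [ccK_apply]
    push_cast
    simp only [one_mul, zero_mul, cos_zero, one_mul]
    intro h
    exact hd (mul_left_cancel₀ pi_ne_zero (Real.injOn_cos (hmem _ h1.2) (hmem _ h2.2) h))

lemma ccAlg_closure_top : ccAlg.topologicalClosure = ⊤ :=
  ContinuousMap.subalgebra_topologicalClosure_eq_top_of_separatesPoints ccAlg ccAlg_separates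

/-! ### Key completeness lemma -/

lemma ccSpan_integral_zero {G : ℝ × ℝ → ℝ} (hG : Integrable G sqMeas)
    (h : ∀ k l : ℤ, ∫ p, cos (k * π * p.1) * cos (l * π * p.2) * G p ∂sqMeas = 0) :
    ∀ a ∈ ccSpan, ∃ b : ℝ × ℝ → ℝ, Continuous b ∧ (∃ C, ∀ p, ‖b p‖ ≤ C) ∧
      (∀ q : sqK, b q = a q) ∧ ∫ p, b p * G p ∂sqMeas = 0 := by
  intro a ha
  induction ha using Submodule.span_induction with
  | mem x hx =>
    obtain ⟨⟨k, l⟩, rfl⟩ := hx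
    refine ⟨fun p => cos (k * π * p.1) * cos (l * π * p.2), by fun_prop, ⟨1, fun p => ?_⟩,
      fun q => rfl, h k l⟩
    rw [Real.norm_eq_abs, abs_mul]
    exact mul_le_one₀ (abs_cos_le_one _) (abs_nonneg _) (abs_cos_le_one _)
  | zero =>
    exact ⟨0, continuous_const, ⟨0, fun p => by simp⟩, fun q => by simp, by simp⟩
  | add y z _ _ h1 h2 =>
    obtain ⟨b1, hb1c, ⟨C1, hC1⟩, hb1r, hb1i⟩ := h1
    obtain ⟨b2, hb2c, ⟨C2, hC2⟩, hb2r, hb2i⟩ := h2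
    refine ⟨b1 + b2, hb1c.add hb2c, ⟨C1 + C2, fun p => (norm_add_le _ _).trans
      (add_le_add (hC1 p) (hC2 p))⟩, fun q => by simp [hb1r q, hb2r q], ?_⟩
    have i1 : Integrable (fun p => b1 p * G p) sqMeas :=
      hG.bdd_mul hb1c.aestronglyMeasurable (Filter.Eventually.of_forall hC1)
    have i2 : Integrable (fun p => b2 p * G p) sqMeas :=
      hG.bdd_mul hb2c.aestronglyMeasurable (Filter.Eventually.of_forall hC2)
    simp only [Pi.add_apply, add_mul]
    rw [integral_add i1 i2, hb1i, hb2i, add_zero]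
  | smul c y _ h1 =>
    obtain ⟨b1, hb1c, ⟨C1, hC1⟩, hb1r, hb1i⟩ := h1
    refine ⟨c • b1, hb1c.const_smul c, ⟨|c| * C1, fun p => ?_⟩,
      fun q => by simp [hb1r q], ?_⟩
    · simp only [Pi.smul_apply, smul_eq_mul, Real.norm_eq_abs, abs_mul]
      exact mul_le_mul_of_nonneg_left (by simpa using hC1 p) (abs_nonneg c)
    · simp only [Pi.smul_apply, smul_eq_mul, mul_assoc]
      rw [integral_const_mul, hb1i, mul_zero]

/-- If an integrable function on the square is orthogonal to all product cosines,
it vanishes a.e. -/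
lemma key_ae_zero {G : ℝ × ℝ → ℝ} (hG : Integrable G sqMeas)
    (h : ∀ k l : ℤ, ∫ p, cos (k * π * p.1) * cos (l * π * p.2) * G p ∂sqMeas = 0) :
    ∀ᵐ p ∂sqMeas, G p = 0 := by
  apply ae_eq_zero_of_integral_contDiff_smul_eq_zero hG.locallyIntegrable
  intro g hg hgsupp
  simp only [smul_eq_mul]
  obtain ⟨Cg, hCg⟩ := hgsupp.exists_bound_of_continuous hg.continuous
  have hgG : Integrable (fun p => g p * G p) sqMeas :=
    hG.bdd_mul hg.continuous.aestronglyMeasurable (Filter.Eventually.of_forall hCg)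
  set c : ℝ := ∫ p, |G p| ∂sqMeas with hc
  have hc0 : 0 ≤ c := integral_nonneg fun p => abs_nonneg _
  have main : ∀ ε : ℝ, 0 < ε → |∫ p, g p * G p ∂sqMeas| ≤ ε * c := by
    intro ε hε
    set gK : C(sqK, ℝ) := ContinuousMap.restrict sqK ⟨g, hg.continuous⟩ with hgK
    have hmem : gK ∈ closure (ccAlg : Set C(sqK, ℝ)) := by
      rw [← Subalgebra.topologicalClosure_coe, ccAlg_closure_top]
      trivial
    obtain ⟨a, haA, hdist⟩ := Metric.mem_closure_iff.1 hmem ε hε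
    obtain ⟨b, hbc, ⟨Cb, hCb⟩, hbr, hbi⟩ := ccSpan_integral_zero hG h a (mem_ccAlg_iff.1 haA)
    have hbG : Integrable (fun p => b p * G p) sqMeas :=
      hG.bdd_mul hbc.aestronglyMeasurable (Filter.Eventually.of_forall hCb)
    have split : ∫ p, g p * G p ∂sqMeas = ∫ p, (g p - b p) * G p ∂sqMeas := by
      rw [show (fun p => (g p - b p) * G p) = fun p => g p * G p - b p * G p by
        funext p; ring]
      rw [integral_sub hgG hbG, hbi, sub_zero]
    rw [split]
    have hsub : Integrable (fun p => (g p - b p) * G p) sqMeas := by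
      simpa [sub_mul, Pi.sub_def] using hgG.sub hbG
    calc |∫ p, (g p - b p) * G p ∂sqMeas| ≤ ∫ p, |(g p - b p) * G p| ∂sqMeas := by
          simpa only [Real.norm_eq_abs] using
            norm_integral_le_integral_norm (μ := sqMeas) (fun p => (g p - b p) * G p)
      _ ≤ ∫ p, ε * |G p| ∂sqMeas := by
          apply integral_mono_ae hsub.abs (hG.abs.const_mul ε)
          filter_upwards [sq_ae_mem] with p hp
          rw [abs_mul]
          apply mul_le_mul_of_nonneg_right _ (abs_nonneg _)
          have hq : g p - b p = gK ⟨p, sq_mem_K hp⟩ - a ⟨p, sq_mem_K hp⟩ := by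
            rw [hbr ⟨p, sq_mem_K hp⟩]; rfl
          rw [hq, ← Real.dist_eq]
          exact (ContinuousMap.dist_apply_le_dist _).trans hdist.le
      _ = ε * c := integral_const_mul ε _
  by_contra hne
  have habs : 0 < |∫ p, g p * G p ∂sqMeas| := abs_pos.2 hne
  have h1 := main (|∫ p, g p * G p ∂sqMeas| / (2 * (c + 1))) (by positivity)
  have h2 : |∫ p, g p * G p ∂sqMeas| / (2 * (c + 1)) * c < |∫ p, g p * G p ∂sqMeas| := by
    rw [div_mul_eq_mul_div, div_lt_iff₀ (by positivity)]
    nlinarith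
  linarith

/-! ### The mode functions -/

/-- `cos(kπx) sin(lπy)`. -/
noncomputable def Pf (k l : ℕ) : ℝ × ℝ → ℝ := fun p => cos (k * π * p.1) * sin (l * π * p.2)

/-- `sin(kπx) cos(lπy)`. -/
noncomputable def Qf (k l : ℕ) : ℝ × ℝ → ℝ := fun p => sin (k * π * p.1) * cos (l * π * p.2)

@[fun_prop] lemma Pf_cont (k l : ℕ) : Continuous (Pf k l) := by unfold Pf; fun_prop
@[fun_prop] lemma Qf_cont (k l : ℕ) : Continuous (Qf k l) := by unfold Qf; fun_prop

lemma Pf_abs_le (k l : ℕ) (p : ℝ × ℝ) : ‖Pf k l p‖ ≤ 1 := by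
  rw [Real.norm_eq_abs, Pf, abs_mul]
  exact mul_le_one₀ (abs_cos_le_one _) (abs_nonneg _) (abs_sin_le_one _)

lemma Qf_abs_le (k l : ℕ) (p : ℝ × ℝ) : ‖Qf k l p‖ ≤ 1 := by
  rw [Real.norm_eq_abs, Qf, abs_mul]
  exact mul_le_one₀ (abs_sin_le_one _) (abs_nonneg _) (abs_cos_le_one _)

/-- The TM vector mode. -/
noncomputable def TMf (k l : ℕ) : ℝ × ℝ → EuclideanSpace ℝ (Fin 2) :=
  fun p => vec2 ((k * π) * Pf k l p) ((l * π) * Qf k l p)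

/-- The TE vector mode. -/
noncomputable def TEf (k l : ℕ) : ℝ × ℝ → EuclideanSpace ℝ (Fin 2) :=
  fun p => vec2 (-(l * π) * Pf k l p) ((k * π) * Qf k l p)

lemma TMf_eq (k l : ℕ) :
    (fun p : ℝ × ℝ =>
      vec2 (deriv (fun t : ℝ => sin (k * π * t) * sin (l * π * p.2)) p.1)
           (deriv (fun t : ℝ => sin (k * π * p.1) * sin (l * π * t)) p.2)) = TMf k l := by
  funext p
  rw [deriv_sin_mul, deriv_mul_sin]
  simp only [TMf, Pf, Qf]
  congr 1 <;> ring

lemma TEf_eq (k l : ℕ) :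
    (fun p : ℝ × ℝ =>
      vec2 (deriv (fun t : ℝ => cos (k * π * p.1) * cos (l * π * t)) p.2)
           (-deriv (fun t : ℝ => cos (k * π * t) * cos (l * π * p.2)) p.1)) = TEf k l := by
  funext p
  rw [deriv_mul_cos, deriv_cos_mul]
  simp only [TEf, Pf, Qf]
  congr 1 <;> ring

lemma TMf_memℒp (k l : ℕ) : MemLp (TMf k l) 2 sqMeas := by
  apply MemLp.of_bound ((continuous_vec2 (by fun_prop) (by fun_prop)).aestronglyMeasurable)
    ((k * π) + (l * π))
  filter_upwards with p
  refine (vec2_norm_le _ _).trans ?_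
  have h1 : |(k : ℝ) * π * Pf k l p| ≤ k * π := by
    rw [abs_mul]
    calc |(k:ℝ) * π| * |Pf k l p| ≤ |(k:ℝ) * π| * 1 :=
          mul_le_mul_of_nonneg_left (by simpa [Real.norm_eq_abs] using Pf_abs_le k l p)
            (abs_nonneg _)
      _ = k * π := by rw [mul_one, abs_of_nonneg (by positivity)]
  have h2 : |(l : ℝ) * π * Qf k l p| ≤ l * π := by
    rw [abs_mul]
    calc |(l:ℝ) * π| * |Qf k l p| ≤ |(l:ℝ) * π| * 1 :=
          mul_le_mul_of_nonneg_left (by simpa [Real.norm_eq_abs] using Qf_abs_le k l p)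
            (abs_nonneg _)
      _ = l * π := by rw [mul_one, abs_of_nonneg (by positivity)]
  exact add_le_add h1 h2

lemma TEf_memℒp (k l : ℕ) : MemLp (TEf k l) 2 sqMeas := by
  apply MemLp.of_bound ((continuous_vec2 (by fun_prop) (by fun_prop)).aestronglyMeasurable)
    ((l * π) + (k * π))
  filter_upwards with p
  refine (vec2_norm_le _ _).trans ?_
  have h1 : |(-((l : ℝ) * π)) * Pf k l p| ≤ l * π := by
    rw [abs_mul, abs_neg]
    calc |(l:ℝ) * π| * |Pf k l p| ≤ |(l:ℝ) * π| * 1 :=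
          mul_le_mul_of_nonneg_left (by simpa [Real.norm_eq_abs] using Pf_abs_le k l p)
            (abs_nonneg _)
      _ = l * π := by rw [mul_one, abs_of_nonneg (by positivity)]
  have h2 : |(k : ℝ) * π * Qf k l p| ≤ k * π := by
    rw [abs_mul]
    calc |(k:ℝ) * π| * |Qf k l p| ≤ |(k:ℝ) * π| * 1 :=
          mul_le_mul_of_nonneg_left (by simpa [Real.norm_eq_abs] using Qf_abs_le k l p)
            (abs_nonneg _)
      _ = k * π := by rw [mul_one, abs_of_nonneg (by positivity)]
  exact add_le_add h1 h2

lemma cos_int_eq_natAbs (n : ℤ) (t : ℝ) : cos ((n:ℝ) * t) = cos ((n.natAbs:ℝ) * t) := by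
  have h : ((n.natAbs : ℝ)) = |(n:ℝ)| := by rw [Nat.cast_natAbs]; exact Int.cast_abs
  rw [h]
  rcases abs_cases ((n:ℝ)) with ⟨h1, _⟩ | ⟨h1, _⟩
  · rw [h1]
  · rw [h1, neg_mul, cos_neg]

lemma cos_mul_sin_eq (m : ℕ) (y : ℝ) :
    cos ((m+1 : ℕ) * π * y) * sin (π * y)
      = 1/2 * sin ((m+2 : ℕ) * π * y) - 1/2 * sin ((m : ℕ) * π * y) := by
  push_cast
  rw [show ((m:ℝ)+2) * π * y = (((m:ℝ)+1) * π * y) + π * y by ring,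
      show (m:ℝ) * π * y = (((m:ℝ)+1) * π * y) - π * y by ring,
      sin_add, sin_sub]
  ring

/-- The main orthogonality argument: an `L²` vector field orthogonal to all TM and TE
modes vanishes. -/
lemma final (g : Lp (EuclideanSpace ℝ (Fin 2)) 2 sqMeas)
    (hTM : ∀ k l : ℕ, 1 ≤ k → 1 ≤ l →
      (inner ℝ ((TMf_memℒp k l).toLp (TMf k l)) g : ℝ) = 0)
    (hTE : ∀ k l : ℕ, (k, l) ≠ (0, 0) →
      (inner ℝ ((TEf_memℒp k l).toLp (TEf k l)) g : ℝ) = 0) :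
    g = 0 := by
  have hgm : AEStronglyMeasurable (⇑g) sqMeas := (Lp.memLp g).aestronglyMeasurable
  have hgint : Integrable (⇑g) sqMeas := by
    rw [← memLp_one_iff_integrable]
    exact (Lp.memLp g).mono_exponent (by norm_num)
  set g0 : ℝ × ℝ → ℝ := fun p => g p 0 with hg0def
  set g1 : ℝ × ℝ → ℝ := fun p => g p 1 with hg1def
  have hg0m : AEStronglyMeasurable g0 sqMeas :=
    (EuclideanSpace.proj (0 : Fin 2)).continuous.comp_aestronglyMeasurable hgm
  have hg1m : AEStronglyMeasurable g1 sqMeas :=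
    (EuclideanSpace.proj (1 : Fin 2)).continuous.comp_aestronglyMeasurable hgm
  have hg0i : Integrable g0 sqMeas := by
    apply hgint.norm.mono' hg0m
    filter_upwards with p
    simpa [Real.norm_eq_abs] using euclid_apply_le_norm (g p) 0
  have hg1i : Integrable g1 sqMeas := by
    apply hgint.norm.mono' hg1m
    filter_upwards with p
    simpa [Real.norm_eq_abs] using euclid_apply_le_norm (g p) 1
  have hPi : ∀ k l : ℕ, Integrable (fun p => Pf k l p * g0 p) sqMeas := fun k l =>
    hg0i.bdd_mul (Pf_cont k l).aestronglyMeasurable (Filter.Eventually.of_forall (Pf_abs_le k l))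
  have hQi : ∀ k l : ℕ, Integrable (fun p => Qf k l p * g1 p) sqMeas := fun k l =>
    hg1i.bdd_mul (Qf_cont k l).aestronglyMeasurable (Filter.Eventually.of_forall (Qf_abs_le k l))
  -- inner products of the modes with g
  have hinnTM : ∀ k l : ℕ, (inner ℝ ((TMf_memℒp k l).toLp (TMf k l)) g : ℝ)
      = (k*π) * ∫ p, Pf k l p * g0 p ∂sqMeas + (l*π) * ∫ p, Qf k l p * g1 p ∂sqMeas := by
    intro k l
    rw [MeasureTheory.L2.inner_def]
    have hae : ∀ᵐ p ∂sqMeas, (inner ℝ (((TMf_memℒp k l).toLp (TMf k l)) p) (g p) : ℝ)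
        = (k*π) * (Pf k l p * g0 p) + (l*π) * (Qf k l p * g1 p) := by
      filter_upwards [(TMf_memℒp k l).coeFn_toLp] with p hp
      rw [hp, TMf, inner_vec2, hg0def, hg1def]
      ring
    rw [integral_congr_ae hae, integral_add ((hPi k l).const_mul _) ((hQi k l).const_mul _),
      integral_const_mul, integral_const_mul]
  have hinnTE : ∀ k l : ℕ, (inner ℝ ((TEf_memℒp k l).toLp (TEf k l)) g : ℝ)
      = -((l*π) * ∫ p, Pf k l p * g0 p ∂sqMeas) + (k*π) * ∫ p, Qf k l p * g1 p ∂sqMeas := by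
    intro k l
    rw [MeasureTheory.L2.inner_def]
    have hae : ∀ᵐ p ∂sqMeas, (inner ℝ (((TEf_memℒp k l).toLp (TEf k l)) p) (g p) : ℝ)
        = -((l*π) * (Pf k l p * g0 p)) + (k*π) * (Qf k l p * g1 p) := by
      filter_upwards [(TEf_memℒp k l).coeFn_toLp] with p hp
      rw [hp, TEf, inner_vec2, hg0def, hg1def]
      ring
    have hint1 : Integrable (fun p => -((l*π) * (Pf k l p * g0 p))) sqMeas :=
      ((hPi k l).const_mul _).neg
    rw [integral_congr_ae hae, integral_add hint1 ((hQi k l).const_mul _),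
      integral_neg, integral_const_mul, integral_const_mul]
  -- the two scalar families of orthogonality relations
  have hA : ∀ k l : ℕ, ∫ p, Pf k l p * g0 p ∂sqMeas = 0 := by
    intro k l
    match k, l with
    | k, 0 =>
      rw [show (fun p => Pf k 0 p * g0 p) = (fun _ => (0:ℝ)) from
        funext fun p => by simp [Pf]]
      exact integral_zero _ _
    | 0, (m+1) =>
      have h2 := hTE 0 (m+1) (by simp)
      rw [hinnTE] at h2
      have hco : ((m+1:ℕ):ℝ) * π ≠ 0 := by positivity
      have h3 : ((m+1:ℕ):ℝ) * π * ∫ p, Pf 0 (m+1) p * g0 p ∂sqMeas = 0 := by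
        push_cast at h2 ⊢
        linarith
      exact (mul_eq_zero.mp h3).resolve_left hco
    | (j+1), (m+1) =>
      have h1 := hTM (j+1) (m+1) (Nat.le_add_left 1 j) (Nat.le_add_left 1 m)
      have h2 := hTE (j+1) (m+1) (by simp)
      rw [hinnTM] at h1
      rw [hinnTE] at h2
      have hco : (((j+1:ℕ):ℝ)^2 + ((m+1:ℕ):ℝ)^2) * π ≠ 0 := by positivity
      have h3 : (((j+1:ℕ):ℝ)^2 + ((m+1:ℕ):ℝ)^2) * π * ∫ p, Pf (j+1) (m+1) p * g0 p ∂sqMeas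
          = 0 := by
        push_cast at h1 h2 ⊢
        nlinarith [h1, h2]
      exact (mul_eq_zero.mp h3).resolve_left hco
  have hB : ∀ k l : ℕ, ∫ p, Qf k l p * g1 p ∂sqMeas = 0 := by
    intro k l
    match k, l with
    | 0, l =>
      rw [show (fun p => Qf 0 l p * g1 p) = (fun _ => (0:ℝ)) from
        funext fun p => by simp [Qf]]
      exact integral_zero _ _
    | (j+1), 0 =>
      have h2 := hTE (j+1) 0 (by simp)
      rw [hinnTE] at h2
      have hco : ((j+1:ℕ):ℝ) * π ≠ 0 := by positivity
      have h3 : ((j+1:ℕ):ℝ) * π * ∫ p, Qf (j+1) 0 p * g1 p ∂sqMeas = 0 := by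
        push_cast at h2 ⊢
        linarith
      exact (mul_eq_zero.mp h3).resolve_left hco
    | (j+1), (m+1) =>
      have h1 := hTM (j+1) (m+1) (Nat.le_add_left 1 j) (Nat.le_add_left 1 m)
      have h2 := hTE (j+1) (m+1) (by simp)
      rw [hinnTM] at h1
      rw [hinnTE] at h2
      have hco : (((j+1:ℕ):ℝ)^2 + ((m+1:ℕ):ℝ)^2) * π ≠ 0 := by positivity
      have h3 : (((j+1:ℕ):ℝ)^2 + ((m+1:ℕ):ℝ)^2) * π * ∫ p, Qf (j+1) (m+1) p * g1 p ∂sqMeas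
          = 0 := by
        push_cast at h1 h2 ⊢
        nlinarith [h1, h2]
      exact (mul_eq_zero.mp h3).resolve_left hco
  -- multiply by the fixed sine weights and test against all product cosines
  have hG0int : Integrable (fun p => sin (π * p.2) * g0 p) sqMeas :=
    hg0i.bdd_mul (Continuous.aestronglyMeasurable (by fun_prop))
      (Filter.Eventually.of_forall fun p => by simpa [Real.norm_eq_abs] using abs_sin_le_one (π * p.2))
  have hG1int : Integrable (fun p => sin (π * p.1) * g1 p) sqMeas :=
    hg1i.bdd_mul (Continuous.aestronglyMeasurable (by fun_prop))
      (Filter.Eventually.of_forall fun p => by simpa [Real.norm_eq_abs] using abs_sin_le_one (π * p.1))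
  have hcc0nat : ∀ k l : ℕ,
      ∫ p, cos (k * π * p.1) * cos (l * π * p.2) * (sin (π * p.2) * g0 p) ∂sqMeas = 0 := by
    intro k l
    match l with
    | 0 =>
      have heq : (fun p : ℝ × ℝ => cos (k * π * p.1) * cos ((0:ℕ) * π * p.2)
          * (sin (π * p.2) * g0 p)) = fun p => Pf k 1 p * g0 p := by
        funext p
        simp only [Pf, Nat.cast_zero, Nat.cast_one, zero_mul, cos_zero, one_mul, mul_one]
        ring
      rw [heq]
      exact hA k 1
    | (m+1) =>
      have heq : (fun p : ℝ × ℝ => cos (k * π * p.1) * cos ((m+1:ℕ) * π * p.2)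
          * (sin (π * p.2) * g0 p))
          = fun p => 1/2 * (Pf k (m+2) p * g0 p) - 1/2 * (Pf k m p * g0 p) := by
        funext p
        simp only [Pf]
        rw [show cos (k * π * p.1) * cos ((m+1:ℕ) * π * p.2) * (sin (π * p.2) * g0 p)
            = cos (k * π * p.1) * (cos ((m+1:ℕ) * π * p.2) * sin (π * p.2)) * g0 p by
          push_cast; ring, cos_mul_sin_eq]
        push_cast
        ring
      rw [heq, integral_sub ((hPi k (m+2)).const_mul _) ((hPi k m).const_mul _),
        integral_const_mul, integral_const_mul, hA, hA]
      ring
  have hcc1nat : ∀ k l : ℕ,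
      ∫ p, cos (k * π * p.1) * cos (l * π * p.2) * (sin (π * p.1) * g1 p) ∂sqMeas = 0 := by
    intro k l
    match k with
    | 0 =>
      have heq : (fun p : ℝ × ℝ => cos ((0:ℕ) * π * p.1) * cos (l * π * p.2)
          * (sin (π * p.1) * g1 p)) = fun p => Qf 1 l p * g1 p := by
        funext p
        simp only [Qf, Nat.cast_zero, Nat.cast_one, zero_mul, cos_zero, one_mul, mul_one]
        ring
      rw [heq]
      exact hB 1 l
    | (j+1) =>
      have heq : (fun p : ℝ × ℝ => cos ((j+1:ℕ) * π * p.1) * cos (l * π * p.2)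
          * (sin (π * p.1) * g1 p))
          = fun p => 1/2 * (Qf (j+2) l p * g1 p) - 1/2 * (Qf j l p * g1 p) := by
        funext p
        simp only [Qf]
        rw [show cos ((j+1:ℕ) * π * p.1) * cos (l * π * p.2) * (sin (π * p.1) * g1 p)
            = cos ((j+1:ℕ) * π * p.1) * sin (π * p.1) * cos (l * π * p.2) * g1 p by
          push_cast; ring, cos_mul_sin_eq]
        push_cast
        ring
      rw [heq, integral_sub ((hQi (j+2) l).const_mul _) ((hQi j l).const_mul _),
        integral_const_mul, integral_const_mul, hB, hB]
      ring
  -- extend to integer frequencies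
  have hcc0 : ∀ k l : ℤ,
      ∫ p, cos (k * π * p.1) * cos (l * π * p.2) * (sin (π * p.2) * g0 p) ∂sqMeas = 0 := by
    intro k l
    have heq : (fun p : ℝ × ℝ => cos (k * π * p.1) * cos (l * π * p.2)
        * (sin (π * p.2) * g0 p))
        = fun p => cos ((k.natAbs : ℕ) * π * p.1) * cos ((l.natAbs : ℕ) * π * p.2)
          * (sin (π * p.2) * g0 p) := by
      funext p
      rw [show (k:ℝ) * π * p.1 = (k:ℝ) * (π * p.1) by ring, cos_int_eq_natAbs,
        show (l:ℝ) * π * p.2 = (l:ℝ) * (π * p.2) by ring, cos_int_eq_natAbs,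
        show ((k.natAbs:ℝ)) * (π * p.1) = (k.natAbs:ℝ) * π * p.1 by ring,
        show ((l.natAbs:ℝ)) * (π * p.2) = (l.natAbs:ℝ) * π * p.2 by ring]
    rw [heq]
    exact hcc0nat k.natAbs l.natAbs
  have hcc1 : ∀ k l : ℤ,
      ∫ p, cos (k * π * p.1) * cos (l * π * p.2) * (sin (π * p.1) * g1 p) ∂sqMeas = 0 := by
    intro k l
    have heq : (fun p : ℝ × ℝ => cos (k * π * p.1) * cos (l * π * p.2)
        * (sin (π * p.1) * g1 p))
        = fun p => cos ((k.natAbs : ℕ) * π * p.1) * cos ((l.natAbs : ℕ) * π * p.2)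
          * (sin (π * p.1) * g1 p) := by
      funext p
      rw [show (k:ℝ) * π * p.1 = (k:ℝ) * (π * p.1) by ring, cos_int_eq_natAbs,
        show (l:ℝ) * π * p.2 = (l:ℝ) * (π * p.2) by ring, cos_int_eq_natAbs,
        show ((k.natAbs:ℝ)) * (π * p.1) = (k.natAbs:ℝ) * π * p.1 by ring,
        show ((l.natAbs:ℝ)) * (π * p.2) = (l.natAbs:ℝ) * π * p.2 by ring]
    rw [heq]
    exact hcc1nat k.natAbs l.natAbs
  -- conclude that both components vanish a.e.
  have hg0z : ∀ᵐ p ∂sqMeas, g0 p = 0 := by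
    filter_upwards [key_ae_zero hG0int hcc0, sq_ae_mem] with p hp hmem
    have hs : sin (π * p.2) ≠ 0 := by
      have h2 := hmem.2
      refine ne_of_gt (sin_pos_of_pos_of_lt_pi ?_ ?_)
      · nlinarith [h2.1, pi_pos]
      · nlinarith [h2.2, pi_pos]
    exact (mul_eq_zero.mp hp).resolve_left hs
  have hg1z : ∀ᵐ p ∂sqMeas, g1 p = 0 := by
    filter_upwards [key_ae_zero hG1int hcc1, sq_ae_mem] with p hp hmem
    have hs : sin (π * p.1) ≠ 0 := by
      have h2 := hmem.1
      refine ne_of_gt (sin_pos_of_pos_of_lt_pi ?_ ?_)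
      · nlinarith [h2.1, pi_pos]
      · nlinarith [h2.2, pi_pos]
    exact (mul_eq_zero.mp hp).resolve_left hs
  have hgz : ⇑g =ᵐ[sqMeas] 0 := by
    filter_upwards [hg0z, hg1z] with p h0 h1
    show g p = 0
    ext i
    fin_cases i
    · exact h0
    · exact h1
  exact (Lp.eq_zero_iff_ae_eq_zero).2 hgz

end SSCproof

open SSCproof in
/-- The linear span of the TM vector modes `∇E_{kl}` (`k, l ≥ 1`, with
`E_{kl}(x,y) = sin(kπx) sin(lπy)`) together with the TE vector modes
`curl_Γ H_{kl} = (∂₂H_{kl}, −∂₁H_{kl})` (`(k,l) ≠ (0,0)`, with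
`H_{kl}(x,y) = cos(kπx) cos(lπy)`) is dense in `L²((0,1)²; ℝ²)`. -/
theorem TM_TE_vector_modes_span_dense_L2 :
    Dense ((Submodule.span ℝ
      ({ f : Lp (EuclideanSpace ℝ (Fin 2)) 2
            (volume.restrict (Set.Ioo (0 : ℝ) 1 ×ˢ Set.Ioo (0 : ℝ) 1)) |
        ∃ k l : ℕ, 1 ≤ k ∧ 1 ≤ l ∧
          f =ᵐ[volume.restrict (Set.Ioo (0 : ℝ) 1 ×ˢ Set.Ioo (0 : ℝ) 1)]
            fun p : ℝ × ℝ =>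
              vec2 (deriv (fun t : ℝ => sin (k * π * t) * sin (l * π * p.2)) p.1)
                   (deriv (fun t : ℝ => sin (k * π * p.1) * sin (l * π * t)) p.2) } ∪
       { f : Lp (EuclideanSpace ℝ (Fin 2)) 2
            (volume.restrict (Set.Ioo (0 : ℝ) 1 ×ˢ Set.Ioo (0 : ℝ) 1)) |
        ∃ k l : ℕ, (k, l) ≠ (0, 0) ∧
          f =ᵐ[volume.restrict (Set.Ioo (0 : ℝ) 1 ×ˢ Set.Ioo (0 : ℝ) 1)]
            fun p : ℝ × ℝ =>
              vec2 (deriv (fun t : ℝ => cos (k * π * p.1) * cos (l * π * t)) p.2)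
                   (-deriv (fun t : ℝ => cos (k * π * t) * cos (l * π * p.2)) p.1) }) :
      Submodule ℝ (Lp (EuclideanSpace ℝ (Fin 2)) 2
        (volume.restrict (Set.Ioo (0 : ℝ) 1 ×ˢ Set.Ioo (0 : ℝ) 1)))) :
      Set (Lp (EuclideanSpace ℝ (Fin 2)) 2
        (volume.restrict (Set.Ioo (0 : ℝ) 1 ×ˢ Set.Ioo (0 : ℝ) 1)))) := by
  rw [Submodule.dense_iff_topologicalClosure_eq_top, Submodule.topologicalClosure_eq_top_iff,
    Submodule.eq_bot_iff]
  intro g hgmem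
  rw [Submodule.mem_orthogonal] at hgmem
  apply final g
  · intro k l hk hl
    apply hgmem
    apply Submodule.subset_span
    left
    exact ⟨k, l, hk, hl, ((TMf_memℒp k l).coeFn_toLp).trans
      (Filter.EventuallyEq.of_eq (TMf_eq k l).symm)⟩
  · intro k l hkl
    apply hgmem
    apply Submodule.subset_span
    right
    exact ⟨k, l, hkl, ((TEf_memℒp k l).coeFn_toLp).trans
      (Filter.EventuallyEq.of_eq (TEf_eq k l).symm)⟩
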